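/- Let q ≥ 0, r > 0, Φ′ > 0, c′ ∈ (0,∞), and a < 0 be reals. Let W, V : ℝ → ℝ be nonnegative, Borel measurable, locally bounded, vanish on (−∞,0), satisfy the convolution identity V(x) = W(x) + r·∫₀ˣ V(x−y)W(y)dy for all x ≥ 0, and suppose x ↦ e^{−Φ′x}·V(x) is nondecreasing on (0,∞) converging to c′, and W(−a) > 0. Then lim_{b→∞} { [W(b−a) + r·∫₀ᵇ V(b−y)·W(y−a) dy]/W(−a) − r·∫₀ᵇ V(y) dy } / V(b) = Z(−a,Φ′)/W(−a) − r/Φ′ = [Φ′·Z(−a,Φ′) − r·W(−a)]/(W(−a)·Φ′), where Z(−a,Φ′) := e^{−Φ′a}·(1 − r·∫₀^{−a} e^{−Φ′u}W(u)du). -/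

import Mathlib

open MeasureTheory Filter Set


private lemma ae_neq (c : ℝ) : ∀ᵐ x : ℝ, x ≠ c := by
  have h : {x : ℝ | ¬ x ≠ c} = {c} := by ext x; simp
  rw [ae_iff, h]; exact measure_singleton c

private lemma aux_II {f : ℝ → ℝ} (hf : Measurable f) {A B C : ℝ}
    (h : ∀ x ∈ Set.uIcc A B, |f x| ≤ C) : IntervalIntegrable f volume A B := by
  rw [intervalIntegrable_iff]
  refine Integrable.mono' (g := fun _ => C)
    (integrableOn_const (ne_of_lt ?_)) hf.aestronglyMeasurable.restrict ?_
  · refine lt_of_le_of_lt (measure_mono Set.uIoc_subset_uIcc) ?_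
    rw [Set.uIcc]; exact measure_Icc_lt_top
  · filter_upwards [ae_restrict_mem measurableSet_uIoc] with x hx
    simpa [Real.norm_eq_abs] using h x (Set.uIoc_subset_uIcc hx)

private lemma aux_exp_int {c : ℝ} (hc : 0 < c) :
    ∫ x in Set.Ioi (0:ℝ), Real.exp (-c * x) = 1 / c := by
  have h := integral_comp_mul_left_Ioi (fun x => Real.exp (-x)) 0 hc
  simp only [mul_zero, smul_eq_mul] at h
  simp_rw [neg_mul]
  rw [h, integral_exp_neg_Ioi_zero, mul_one, one_div]


/-- Lemma B.3(i), convergence of `I_a^{(q,r)}(b)/W^{(q+r)}(b)` as `b → ∞`,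
together with the identity between the two expressions for the limit. -/
theorem stmt_10 (q r Φ' c' a : ℝ) (hq : 0 ≤ q) (hr : 0 < r) (hΦ' : 0 < Φ')
    (hc' : 0 < c') (ha : a < 0)
    (W V : ℝ → ℝ) (hWnn : ∀ x, 0 ≤ W x) (hVnn : ∀ x, 0 ≤ V x)
    (hWm : Measurable W) (hVm : Measurable V)
    (hWloc : ∀ K : Set ℝ, IsCompact K → ∃ C, ∀ x ∈ K, |W x| ≤ C)
    (hVloc : ∀ K : Set ℝ, IsCompact K → ∃ C, ∀ x ∈ K, |V x| ≤ C)
    (hW0 : ∀ x < 0, W x = 0) (hV0 : ∀ x < 0, V x = 0)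
    (hconv : ∀ x ≥ (0:ℝ), V x = W x + r * ∫ y in (0:ℝ)..x, V (x - y) * W y)
    (hVmono : MonotoneOn (fun x => Real.exp (-Φ' * x) * V x) (Set.Ioi 0))
    (hVlim : Tendsto (fun x => Real.exp (-Φ' * x) * V x) atTop (nhds c'))
    (hWa : 0 < W (-a))
    (ZΦ' : ℝ → ℝ)
    (hZΦ' : ∀ x, ZΦ' x
      = Real.exp (Φ' * x) * (1 - r * ∫ u in (0:ℝ)..x, Real.exp (-Φ' * u) * W u)) :
    Tendsto (fun b => ((W (b - a) + r * ∫ y in (0:ℝ)..b, V (b - y) * W (y - a)) / W (-a)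
        - r * ∫ y in (0:ℝ)..b, V y) / V b)
      atTop (nhds (ZΦ' (-a) / W (-a) - r / Φ'))
    ∧ ZΦ' (-a) / W (-a) - r / Φ' = (Φ' * ZΦ' (-a) - r * W (-a)) / (W (-a) * Φ') := by
  have hWa0 : W (-a) ≠ 0 := ne_of_gt hWa
  have hΦ0 : Φ' ≠ 0 := ne_of_gt hΦ'
  have hc0 : c' ≠ 0 := ne_of_gt hc'
  set w : ℝ → ℝ := fun x => Real.exp (-Φ' * x) * W x with hwdef
  set v : ℝ → ℝ := fun x => Real.exp (-Φ' * x) * V x with hvdef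
  have hwm : Measurable w := (Real.measurable_exp.comp (measurable_id.const_mul (-Φ'))).mul hWm
  have hvm : Measurable v := (Real.measurable_exp.comp (measurable_id.const_mul (-Φ'))).mul hVm
  have hwnn : ∀ x, 0 ≤ w x := fun x => mul_nonneg (Real.exp_nonneg _) (hWnn x)
  have hvnn : ∀ x, 0 ≤ v x := fun x => mul_nonneg (Real.exp_nonneg _) (hVnn x)
  have hw0 : ∀ x < 0, w x = 0 := by intro x hx; simp [hwdef, hW0 x hx]
  have hWe : ∀ x, W x = Real.exp (Φ' * x) * w x := by
    intro x
    rw [hwdef]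
    show W x = Real.exp (Φ' * x) * (Real.exp (-Φ' * x) * W x)
    rw [← mul_assoc, ← Real.exp_add, show Φ' * x + -Φ' * x = 0 by ring, Real.exp_zero, one_mul]
  have hVe : ∀ x, V x = Real.exp (Φ' * x) * v x := by
    intro x
    rw [hvdef]
    show V x = Real.exp (Φ' * x) * (Real.exp (-Φ' * x) * V x)
    rw [← mul_assoc, ← Real.exp_add, show Φ' * x + -Φ' * x = 0 by ring, Real.exp_zero, one_mul]
  have hexple : ∀ z : ℝ, 0 ≤ z → Real.exp (-Φ' * z) ≤ 1 := by
    intro z hz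
    rw [show (1:ℝ) = Real.exp 0 by rw [Real.exp_zero]]
    exact Real.exp_le_exp.2 (by nlinarith)
  have hvc : ∀ x, 0 < x → v x ≤ c' := by
    intro x hx
    refine ge_of_tendsto hVlim ?_
    filter_upwards [eventually_ge_atTop x] with y hy
    exact hVmono (Set.mem_Ioi.2 hx) (Set.mem_Ioi.2 (lt_of_lt_of_le hx hy)) hy
  have hWV : ∀ x, W x ≤ V x := by
    intro x
    rcases lt_or_ge x 0 with h | h
    · rw [hW0 x h, hV0 x h]
    · rw [hconv x h]
      have h1 : 0 ≤ ∫ y in (0:ℝ)..x, V (x - y) * W y :=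
        intervalIntegral.integral_nonneg h (fun u _ => mul_nonneg (hVnn _) (hWnn _))
      nlinarith
  have hwc : ∀ x, 0 < x → w x ≤ c' := by
    intro x hx
    refine le_trans ?_ (hvc x hx)
    rw [hwdef, hvdef]
    exact mul_le_mul_of_nonneg_left (hWV x) (Real.exp_nonneg _)
  -- convolution identity for w, v
  have hconv' : ∀ x ≥ (0:ℝ), v x = w x + r * ∫ y in (0:ℝ)..x, v (x - y) * w y := by
    intro x hx
    have e1 : ∀ y : ℝ, Real.exp (-Φ' * x) * (V (x - y) * W y) = v (x - y) * w y := by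
      intro y
      rw [hvdef, hwdef]
      show _ = Real.exp (-Φ' * (x - y)) * V (x - y) * (Real.exp (-Φ' * y) * W y)
      rw [show -Φ' * x = -Φ' * (x - y) + -Φ' * y by ring, Real.exp_add]; ring
    calc v x = Real.exp (-Φ' * x) * V x := by rw [hvdef]
      _ = Real.exp (-Φ' * x) * (W x + r * ∫ y in (0:ℝ)..x, V (x - y) * W y) := by
            rw [← hconv x hx]
      _ = w x + r * (Real.exp (-Φ' * x) * ∫ y in (0:ℝ)..x, V (x - y) * W y) := by
            rw [hwdef]; ring
      _ = w x + r * ∫ y in (0:ℝ)..x, Real.exp (-Φ' * x) * (V (x - y) * W y) := by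
            rw [intervalIntegral.integral_const_mul]
      _ = w x + r * ∫ y in (0:ℝ)..x, v (x - y) * w y := by simp_rw [e1]
  -- interval integrability helpers
  have keyIIw : ∀ s t : ℝ, IntervalIntegrable w volume s t := by
    intro s t
    obtain ⟨Cw, hCw⟩ := hWloc (Set.uIcc s t) isCompact_uIcc
    refine aux_II hwm (C := max Cw 0) ?_
    intro y hy
    rcases lt_or_ge y 0 with h | h
    · rw [hw0 y h]; simp
    · refine le_trans ?_ (le_max_left _ _)
      rw [hwdef]
      show |Real.exp (-Φ' * y) * W y| ≤ Cw
      rw [abs_mul, abs_of_pos (Real.exp_pos _)]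
      calc Real.exp (-Φ' * y) * |W y| ≤ 1 * |W y| :=
            mul_le_mul_of_nonneg_right (hexple y h) (abs_nonneg _)
        _ = |W y| := one_mul _
        _ ≤ Cw := hCw y hy
  have keyII : ∀ x ≥ (0:ℝ), ∀ s t : ℝ, Set.uIcc s t ⊆ Set.Icc 0 x →
      IntervalIntegrable (fun y => v (x - y) * w y) volume s t := by
    intro x hx s t hst
    obtain ⟨Cv, hCv⟩ := hVloc (Set.Icc 0 x) isCompact_Icc
    obtain ⟨Cw, hCw⟩ := hWloc (Set.Icc 0 x) isCompact_Icc
    have hCv0 : 0 ≤ Cv := le_trans (abs_nonneg _) (hCv 0 (Set.left_mem_Icc.2 hx))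
    have hCw0 : 0 ≤ Cw := le_trans (abs_nonneg _) (hCw 0 (Set.left_mem_Icc.2 hx))
    refine aux_II ((hvm.comp (measurable_const.sub measurable_id)).mul hwm) (C := Cv * Cw) ?_
    intro y hy
    have hy' := hst hy
    have h1 : x - y ∈ Set.Icc (0:ℝ) x := ⟨by linarith [hy'.2], by linarith [hy'.1]⟩
    show |v (x - y) * w y| ≤ Cv * Cw
    rw [abs_mul]
    have hb1 : |v (x - y)| ≤ Cv := by
      rw [hvdef]
      show |Real.exp (-Φ' * (x - y)) * V (x - y)| ≤ Cv
      rw [abs_mul, abs_of_pos (Real.exp_pos _)]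
      calc Real.exp (-Φ' * (x - y)) * |V (x - y)| ≤ 1 * |V (x - y)| :=
            mul_le_mul_of_nonneg_right (hexple _ h1.1) (abs_nonneg _)
        _ = |V (x - y)| := one_mul _
        _ ≤ Cv := hCv _ h1
    have hb2 : |w y| ≤ Cw := by
      rw [hwdef]
      show |Real.exp (-Φ' * y) * W y| ≤ Cw
      rw [abs_mul, abs_of_pos (Real.exp_pos _)]
      calc Real.exp (-Φ' * y) * |W y| ≤ 1 * |W y| :=
            mul_le_mul_of_nonneg_right (hexple _ hy'.1) (abs_nonneg _)
        _ = |W y| := one_mul _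
        _ ≤ Cw := hCw _ hy'
    exact mul_le_mul hb1 hb2 (abs_nonneg _) hCv0
  -- threshold T
  obtain ⟨T, hTpos, hT⟩ : ∃ T : ℝ, 0 < T ∧ ∀ x, T ≤ x → c' / 2 ≤ v x := by
    have h := hVlim.eventually (eventually_gt_nhds (by linarith : c' / 2 < c'))
    rw [eventually_atTop] at h
    obtain ⟨T₀, hT₀⟩ := h
    exact ⟨max T₀ 1, lt_of_lt_of_le one_pos (le_max_right _ _),
      fun x hx => (hT₀ x (le_trans (le_max_left _ _) hx)).le⟩
  have hVpos : ∀ b, T ≤ b → 0 < V b := by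
    intro b hb
    rcases (hVnn b).lt_or_eq with h | h
    · exact h
    · exfalso
      have h1 : c' / 2 ≤ v b := hT b hb
      rw [hvdef] at h1
      simp only [← h] at h1
      nlinarith
  -- uniform bound on ∫₀^M w
  have hbdd : ∀ M, 0 ≤ M → (∫ y in (0:ℝ)..M, w y) ≤ 2 / r := by
    intro M hM
    set x := M + T with hxdef
    have hx0 : (0:ℝ) ≤ x := by positivity
    have hxT : T ≤ x := by simp [hxdef]; linarith
    have hIw : IntervalIntegrable w volume 0 M := keyIIw 0 M
    have hI1 : IntervalIntegrable (fun y => v (x - y) * w y) volume 0 M := by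
      refine keyII x hx0 0 M ?_
      rw [Set.uIcc_of_le hM]
      exact Set.Icc_subset_Icc le_rfl (by linarith)
    have hI2 : IntervalIntegrable (fun y => v (x - y) * w y) volume M x := by
      refine keyII x hx0 M x ?_
      rw [Set.uIcc_of_le (by linarith)]
      exact Set.Icc_subset_Icc hM le_rfl
    have step1 : c' / 2 * ∫ y in (0:ℝ)..M, w y ≤ ∫ y in (0:ℝ)..M, v (x - y) * w y := by
      rw [← intervalIntegral.integral_const_mul]
      refine intervalIntegral.integral_mono_on hM (hIw.const_mul _) hI1 ?_
      intro y hy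
      have h2 : T ≤ x - y := by simp [hxdef]; linarith [hy.2]
      exact mul_le_mul_of_nonneg_right (hT _ h2) (hwnn y)
    have step2 : (∫ y in (0:ℝ)..M, v (x - y) * w y) ≤ ∫ y in (0:ℝ)..x, v (x - y) * w y := by
      have hsplit := intervalIntegral.integral_add_adjacent_intervals hI1 hI2
      have hnn : 0 ≤ ∫ y in M..x, v (x - y) * w y :=
        intervalIntegral.integral_nonneg (by linarith) (fun u _ => mul_nonneg (hvnn _) (hwnn _))
      linarith
    have step3 : r * ∫ y in (0:ℝ)..x, v (x - y) * w y ≤ c' := by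
      have h4 := hconv' x hx0
      have h5 := hvc x (by linarith)
      have h6 := hwnn x
      linarith
    rw [le_div_iff₀ hr]
    nlinarith [intervalIntegral.integral_nonneg (μ := volume) hM (fun u _ => hwnn u)]
  -- integrability of w on (0,∞)
  have hwint : IntegrableOn w (Set.Ioi (0:ℝ)) volume := by
    refine integrableOn_Ioi_of_intervalIntegral_norm_bounded (b := fun n : ℕ => (n:ℝ)) (2 / r) 0
      (fun n => (keyIIw 0 (n:ℝ)).1) tendsto_natCast_atTop_atTop ?_
    refine Eventually.of_forall fun n => ?_
    have : (∫ x in (0:ℝ)..(n:ℝ), ‖w x‖) = ∫ x in (0:ℝ)..(n:ℝ), w x :=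
      intervalIntegral.integral_congr fun x _ => by
        rw [Real.norm_eq_abs, abs_of_nonneg (hwnn x)]
    rw [this]
    exact hbdd _ (Nat.cast_nonneg n)
  have hwind : Integrable (Set.indicator (Set.Ioi (0:ℝ)) w) volume :=
    (integrable_indicator_iff measurableSet_Ioi).2 hwint
  set I1 : ℝ := ∫ y in Set.Ioi (0:ℝ), w y with hI1def
  -- step 2: limit of the convolution integral
  have hVconvLim : Tendsto (fun b => ∫ y in (0:ℝ)..b, v (b - y) * w y) atTop
      (nhds (c' * I1)) := by
    have key : Tendsto
        (fun b => ∫ y, Set.indicator (Set.Ioc 0 b) (fun y => v (b - y) * w y) y) atTop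
        (nhds (∫ y, c' * Set.indicator (Set.Ioi 0) w y)) := by
      refine tendsto_integral_filter_of_dominated_convergence
        (bound := fun y => c' * Set.indicator (Set.Ioi 0) w y) ?_ ?_ ?_ ?_
      · exact Eventually.of_forall fun b =>
          (((hvm.comp (measurable_const.sub measurable_id)).mul hwm).indicator
            measurableSet_Ioc).aestronglyMeasurable
      · refine Eventually.of_forall fun b => ?_
        filter_upwards [ae_neq b] with y hy
        rw [Real.norm_eq_abs]
        by_cases hmem : y ∈ Set.Ioc (0:ℝ) b
        · rw [Set.indicator_of_mem hmem]
          have hy2 : y < b := lt_of_le_of_ne hmem.2 hy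
          rw [Set.indicator_of_mem (Set.mem_Ioi.2 hmem.1),
            abs_of_nonneg (mul_nonneg (hvnn _) (hwnn _))]
          exact mul_le_mul_of_nonneg_right (hvc _ (by linarith)) (hwnn y)
        · rw [Set.indicator_of_notMem hmem]
          simpa using mul_nonneg hc'.le (Set.indicator_nonneg (fun z _ => hwnn z) y)
      · exact hwind.const_mul c'
      · filter_upwards [ae_neq (0:ℝ)] with y hy
        rcases lt_or_gt_of_ne hy with hneg | hpos
        · have hz : ∀ b : ℝ, Set.indicator (Set.Ioc 0 b) (fun y => v (b - y) * w y) y = 0 :=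
            fun b => Set.indicator_of_notMem (fun hmem => absurd hmem.1 (by linarith)) _
          rw [Set.indicator_of_notMem (by simp [Set.mem_Ioi]; linarith)]
          simp only [hz, mul_zero]
          exact tendsto_const_nhds
        · have hev : ∀ᶠ b in atTop,
              v (b - y) * w y = Set.indicator (Set.Ioc 0 b) (fun y => v (b - y) * w y) y := by
            filter_upwards [eventually_ge_atTop y] with b hb
            exact (Set.indicator_of_mem (Set.mem_Ioc.2 ⟨hpos, hb⟩) (fun z => v (b - z) * w z)).symm
          rw [Set.indicator_of_mem (Set.mem_Ioi.2 hpos)]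
          refine Tendsto.congr' hev ?_
          have h1 : Tendsto (fun b : ℝ => v (b - y)) atTop (nhds c') := by
            have := hVlim.comp (tendsto_atTop_add_const_right atTop (-y) tendsto_id)
            simpa [Function.comp_def, sub_eq_add_neg] using this
          simpa [mul_comm] using h1.mul (tendsto_const_nhds : Tendsto (fun _ : ℝ => w y) atTop (nhds (w y)))
    have hval : (∫ y, c' * Set.indicator (Set.Ioi 0) w y) = c' * I1 := by
      rw [integral_const_mul, integral_indicator measurableSet_Ioi]
    have heq : (fun b => ∫ y, Set.indicator (Set.Ioc 0 b) (fun y => v (b - y) * w y) y) =ᶠ[atTop]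
        (fun b => ∫ y in (0:ℝ)..b, v (b - y) * w y) := by
      filter_upwards [eventually_ge_atTop (0:ℝ)] with b hb
      rw [integral_indicator measurableSet_Ioc, intervalIntegral.integral_of_le hb]
    exact hval ▸ key.congr' heq
  -- limit of w
  have hwlimL : Tendsto w atTop (nhds (c' - r * (c' * I1))) := by
    have hev : (fun b => v b - r * ∫ y in (0:ℝ)..b, v (b - y) * w y) =ᶠ[atTop] w := by
      filter_upwards [eventually_ge_atTop (0:ℝ)] with b hb
      have := hconv' b hb; linarith
    exact (hVlim.sub (hVconvLim.const_mul r)).congr' hev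
  have hL0 : c' - r * (c' * I1) = 0 := by
    by_contra hL
    have hLnn : 0 ≤ c' - r * (c' * I1) :=
      ge_of_tendsto hwlimL (Eventually.of_forall fun b => hwnn b)
    have hLpos : 0 < c' - r * (c' * I1) := lt_of_le_of_ne hLnn (Ne.symm hL)
    set L := c' - r * (c' * I1) with hLdef
    have hev := hwlimL.eventually (eventually_gt_nhds (by linarith : L / 2 < L))
    rw [eventually_atTop] at hev
    obtain ⟨M, hM⟩ := hev
    set M' := max M 1 with hM'def
    have hsub : Set.Ioi M' ⊆ Set.Ioi (0:ℝ) :=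
      Set.Ioi_subset_Ioi (le_trans zero_le_one (le_max_right _ _))
    have h1 : IntegrableOn w (Set.Ioi M') volume := hwint.mono_set hsub
    have h2 : IntegrableOn (fun _ : ℝ => L / 2) (Set.Ioi M') volume := by
      refine Integrable.mono' h1 aestronglyMeasurable_const ?_
      filter_upwards [ae_restrict_mem measurableSet_Ioi] with x hx
      rw [Real.norm_eq_abs, abs_of_nonneg (by linarith)]
      exact (hM x (le_trans (le_max_left _ _) (le_of_lt hx))).le
    rcases (integrableOn_const_iff (C := L / 2) enorm_ne_top).1 h2 with h | h
    · exact hL (by have := enorm_eq_zero.1 h; linarith)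
    · rw [Real.volume_Ioi] at h
      exact absurd h (lt_irrefl ⊤)
  have hrI : r * I1 = 1 := by
    rcases mul_eq_zero.1 (show c' * (1 - r * I1) = 0 by linear_combination hL0) with h | h
    · exact absurd h hc0
    · linarith
  have hwlim0 : Tendsto w atTop (nhds 0) := hL0 ▸ hwlimL
  -- ratio identities
  have hratio1 : ∀ b c : ℝ, W (b - c) / V b = Real.exp (-Φ' * c) * (w (b - c) / v b) := by
    intro b c
    rw [hWe (b - c), hVe b,
      show Real.exp (Φ' * (b - c)) = Real.exp (-Φ' * c) * Real.exp (Φ' * b) by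
        rw [← Real.exp_add]; congr 1; ring,
      mul_assoc, mul_div_assoc, mul_div_mul_left _ _ (Real.exp_ne_zero _)]
  have hratio2 : ∀ b c : ℝ, V (b - c) / V b = Real.exp (-Φ' * c) * (v (b - c) / v b) := by
    intro b c
    rw [hVe (b - c), hVe b,
      show Real.exp (Φ' * (b - c)) = Real.exp (-Φ' * c) * Real.exp (Φ' * b) by
        rw [← Real.exp_add]; congr 1; ring,
      mul_assoc, mul_div_assoc, mul_div_mul_left _ _ (Real.exp_ne_zero _)]
  -- C1
  have hC1 : Tendsto (fun b => W (b - a) / V b) atTop (nhds 0) := by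
    have h1 : Tendsto (fun b : ℝ => w (b - a)) atTop (nhds 0) := by
      have := hwlim0.comp (tendsto_atTop_add_const_right atTop (-a) tendsto_id)
      simpa [Function.comp_def, sub_eq_add_neg] using this
    have h2 : Tendsto (fun b => w (b - a) / v b) atTop (nhds 0) := by
      simpa [Pi.div_def] using h1.div hVlim hc0
    have h3 := h2.const_mul (Real.exp (-Φ' * a))
    rw [mul_zero] at h3
    exact Tendsto.congr (fun b => (hratio1 b a).symm) h3
  -- C3
  have hC3 : Tendsto (fun b => (∫ y in (0:ℝ)..b, V y) / V b) atTop (nhds (1 / Φ')) := by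
    have hflip : ∀ b : ℝ, (∫ y in (0:ℝ)..b, V y) = ∫ y in (0:ℝ)..b, V (b - y) := by
      intro b
      rw [intervalIntegral.integral_comp_sub_left V b]
      norm_num
    have hval : (∫ t, Set.indicator (Set.Ioi 0) (fun t => Real.exp (-Φ' * t)) t) = 1 / Φ' := by
      rw [integral_indicator measurableSet_Ioi, aux_exp_int hΦ']
    have key : Tendsto (fun b => ∫ t, Set.indicator (Set.Ioc 0 b) (fun t => V (b - t)) t / V b)
        atTop (nhds (∫ t, Set.indicator (Set.Ioi 0) (fun t => Real.exp (-Φ' * t)) t)) := by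
      refine tendsto_integral_filter_of_dominated_convergence
        (bound := fun t => 2 * Set.indicator (Set.Ioi 0) (fun t => Real.exp (-Φ' * t)) t)
        ?_ ?_ ?_ ?_
      · refine Eventually.of_forall fun b => ?_
        exact (((hVm.comp (measurable_const.sub measurable_id)).indicator
          measurableSet_Ioc).div_const (V b)).aestronglyMeasurable
      · filter_upwards [eventually_ge_atTop T] with b hb
        filter_upwards [ae_neq b] with t ht
        rw [Real.norm_eq_abs]
        by_cases hmem : t ∈ Set.Ioc (0:ℝ) b
        · rw [Set.indicator_of_mem hmem (fun z => V (b - z)),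
            Set.indicator_of_mem (Set.mem_Ioi.2 hmem.1) (fun z => Real.exp (-Φ' * z))]
          have ht2 : t < b := lt_of_le_of_ne hmem.2 ht
          have hVb := hVpos b hb
          rw [abs_of_nonneg (div_nonneg (hVnn _) hVb.le), hratio2 b t]
          have hr1 : v (b - t) / v b ≤ 2 := by
            have hvb : 0 < v b := lt_of_lt_of_le (by linarith) (hT b hb)
            rw [div_le_iff₀ hvb]
            have h1 := hvc (b - t) (by linarith [hmem.1])
            have h2 := hT b hb
            linarith
          calc Real.exp (-Φ' * t) * (v (b - t) / v b) ≤ Real.exp (-Φ' * t) * 2 :=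
                mul_le_mul_of_nonneg_left hr1 (Real.exp_nonneg _)
            _ = 2 * Real.exp (-Φ' * t) := by ring
        · rw [Set.indicator_of_notMem hmem]
          simp only [zero_div, abs_zero]
          exact mul_nonneg (by norm_num)
            (Set.indicator_nonneg (fun z _ => Real.exp_nonneg _) t)
      · exact ((integrable_indicator_iff measurableSet_Ioi).2
          (exp_neg_integrableOn_Ioi 0 hΦ')).const_mul 2
      · filter_upwards [ae_neq (0:ℝ)] with t ht
        rcases lt_or_gt_of_ne ht with hneg | hpos
        · rw [Set.indicator_of_notMem (by simp [Set.mem_Ioi]; linarith)]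
          have hz : ∀ b : ℝ,
              Set.indicator (Set.Ioc 0 b) (fun t => V (b - t)) t / V b = 0 := by
            intro b
            rw [Set.indicator_of_notMem (fun hmem => absurd hmem.1 (by linarith))]
            exact zero_div _
          simp only [hz]
          exact tendsto_const_nhds
        · rw [Set.indicator_of_mem (Set.mem_Ioi.2 hpos) (fun z => Real.exp (-Φ' * z))]
          have hev : ∀ᶠ b in atTop, V (b - t) / V b
              = Set.indicator (Set.Ioc 0 b) (fun t => V (b - t)) t / V b := by
            filter_upwards [eventually_ge_atTop t] with b hb
            rw [Set.indicator_of_mem (Set.mem_Ioc.2 ⟨hpos, hb⟩) (fun z => V (b - z))]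
          refine Tendsto.congr' hev ?_
          have h1 : Tendsto (fun b : ℝ => v (b - t)) atTop (nhds c') := by
            have := hVlim.comp (tendsto_atTop_add_const_right atTop (-t) tendsto_id)
            simpa [Function.comp_def, sub_eq_add_neg] using this
          have h2 : Tendsto (fun b : ℝ => v (b - t) / v b) atTop (nhds 1) := by
            have := h1.div hVlim hc0
            simpa [Pi.div_def, div_self hc0] using this
          have h3 := h2.const_mul (Real.exp (-Φ' * t))
          rw [mul_one] at h3
          exact Tendsto.congr (fun b => (hratio2 b t).symm) h3
    have heq : (fun b => ∫ t, Set.indicator (Set.Ioc 0 b) (fun t => V (b - t)) t / V b)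
        =ᶠ[atTop] (fun b => (∫ y in (0:ℝ)..b, V y) / V b) := by
      filter_upwards [eventually_ge_atTop (0:ℝ)] with b hb
      rw [integral_div, integral_indicator measurableSet_Ioc,
        ← intervalIntegral.integral_of_le hb, ← hflip b]
    exact hval ▸ key.congr' heq
  -- C2
  set I2 : ℝ := ∫ y in Set.Ioi (-a), w y with hI2def
  have hshift : (fun y : ℝ => Set.indicator (Set.Ioi 0) (fun y => w (y - a)) y)
      = fun y : ℝ => Set.indicator (Set.Ioi (-a)) w (y - a) := by
    funext y
    by_cases hy : (0:ℝ) < y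
    · rw [Set.indicator_of_mem (Set.mem_Ioi.2 hy) (fun z => w (z - a)),
        Set.indicator_of_mem (Set.mem_Ioi.2 (by linarith : -a < y - a))]
    · rw [Set.indicator_of_notMem (by simpa [Set.mem_Ioi] using hy),
        Set.indicator_of_notMem (by simp only [Set.mem_Ioi, not_lt]; linarith [not_lt.1 hy])]
  have hbint : Integrable (fun y : ℝ => Set.indicator (Set.Ioi 0) (fun y => w (y - a)) y)
      volume := by
    rw [hshift]
    exact ((integrable_indicator_iff measurableSet_Ioi).2
      (hwint.mono_set (Set.Ioi_subset_Ioi (by linarith)))).comp_sub_right a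
  have hintshift : (∫ y, Set.indicator (Set.Ioi 0) (fun y => w (y - a)) y) = I2 := by
    rw [hshift, integral_sub_right_eq_self (Set.indicator (Set.Ioi (-a)) w) a,
      integral_indicator measurableSet_Ioi]
  have hC2 : Tendsto (fun b => (∫ y in (0:ℝ)..b, V (b - y) * W (y - a)) / V b) atTop
      (nhds (Real.exp (-Φ' * a) * I2)) := by
    have hval : (∫ y, Real.exp (-Φ' * a) * Set.indicator (Set.Ioi 0) (fun y => w (y - a)) y)
        = Real.exp (-Φ' * a) * I2 := by rw [integral_const_mul, hintshift]
    have key : Tendsto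
        (fun b => ∫ y, Set.indicator (Set.Ioc 0 b) (fun y => V (b - y) * W (y - a)) y / V b)
        atTop
        (nhds (∫ y, Real.exp (-Φ' * a) * Set.indicator (Set.Ioi 0) (fun y => w (y - a)) y)) := by
      refine tendsto_integral_filter_of_dominated_convergence
        (bound := fun y =>
          2 * Real.exp (-Φ' * a) * Set.indicator (Set.Ioi 0) (fun y => w (y - a)) y)
        ?_ ?_ ?_ ?_
      · refine Eventually.of_forall fun b => ?_
        exact ((((hVm.comp (measurable_const.sub measurable_id)).mul
          (hWm.comp (measurable_id.sub measurable_const))).indicator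
          measurableSet_Ioc).div_const (V b)).aestronglyMeasurable
      · filter_upwards [eventually_ge_atTop T] with b hb
        filter_upwards [ae_neq b] with y hy
        rw [Real.norm_eq_abs]
        by_cases hmem : y ∈ Set.Ioc (0:ℝ) b
        · rw [Set.indicator_of_mem hmem (fun z => V (b - z) * W (z - a)),
            Set.indicator_of_mem (Set.mem_Ioi.2 hmem.1) (fun z => w (z - a))]
          have hy2 : y < b := lt_of_le_of_ne hmem.2 hy
          have hVb := hVpos b hb
          rw [abs_of_nonneg (div_nonneg (mul_nonneg (hVnn _) (hWnn _)) hVb.le), div_le_iff₀ hVb,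
            hVe (b - y), hWe (y - a), hVe b]
          have hexp : Real.exp (Φ' * (b - y)) * Real.exp (Φ' * (y - a))
              = Real.exp (-Φ' * a) * Real.exp (Φ' * b) := by
            rw [← Real.exp_add, ← Real.exp_add]; congr 1; ring
          have h1 : v (b - y) ≤ 2 * v b := by
            have h1a := hvc (b - y) (by linarith [hmem.1])
            have h1b := hT b hb
            linarith
          calc Real.exp (Φ' * (b - y)) * v (b - y) * (Real.exp (Φ' * (y - a)) * w (y - a))
              = Real.exp (Φ' * (b - y)) * Real.exp (Φ' * (y - a)) * (v (b - y) * w (y - a)) := by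
                ring
            _ = Real.exp (-Φ' * a) * Real.exp (Φ' * b) * (v (b - y) * w (y - a)) := by rw [hexp]
            _ ≤ Real.exp (-Φ' * a) * Real.exp (Φ' * b) * (2 * v b * w (y - a)) := by
                refine mul_le_mul_of_nonneg_left ?_ (by positivity)
                exact mul_le_mul_of_nonneg_right h1 (hwnn _)
            _ = 2 * Real.exp (-Φ' * a) * w (y - a) * (Real.exp (Φ' * b) * v b) := by ring
        · rw [Set.indicator_of_notMem hmem]
          simp only [zero_div, abs_zero]
          exact mul_nonneg (mul_nonneg (by norm_num) (Real.exp_nonneg _))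
            (Set.indicator_nonneg (fun z _ => hwnn _) y)
      · exact hbint.const_mul _
      · filter_upwards [ae_neq (0:ℝ)] with y hy
        rcases lt_or_gt_of_ne hy with hneg | hpos
        · rw [Set.indicator_of_notMem (by simp [Set.mem_Ioi]; linarith)]
          have hz : ∀ b : ℝ,
              Set.indicator (Set.Ioc 0 b) (fun y => V (b - y) * W (y - a)) y / V b = 0 := by
            intro b
            rw [Set.indicator_of_notMem (fun hmem => absurd hmem.1 (by linarith))]
            exact zero_div _
          simp only [hz, mul_zero]
          exact tendsto_const_nhds
        · rw [Set.indicator_of_mem (Set.mem_Ioi.2 hpos) (fun z => w (z - a))]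
          have hev : ∀ᶠ b in atTop, V (b - y) / V b * W (y - a)
              = Set.indicator (Set.Ioc 0 b) (fun y => V (b - y) * W (y - a)) y / V b := by
            filter_upwards [eventually_ge_atTop y] with b hb
            rw [Set.indicator_of_mem (Set.mem_Ioc.2 ⟨hpos, hb⟩) (fun z => V (b - z) * W (z - a))]
            ring
          refine Tendsto.congr' hev ?_
          have h1 : Tendsto (fun b : ℝ => v (b - y)) atTop (nhds c') := by
            have := hVlim.comp (tendsto_atTop_add_const_right atTop (-y) tendsto_id)
            simpa [Function.comp_def, sub_eq_add_neg] using this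
          have h2 : Tendsto (fun b : ℝ => v (b - y) / v b) atTop (nhds 1) := by
            have := h1.div hVlim hc0
            simpa [Pi.div_def, div_self hc0] using this
          have h3 := (h2.const_mul (Real.exp (-Φ' * y))).mul_const (W (y - a))
          rw [mul_one] at h3
          have h4 : Tendsto (fun b => V (b - y) / V b * W (y - a)) atTop
              (nhds (Real.exp (-Φ' * y) * W (y - a))) := by
            refine Tendsto.congr (fun b => ?_) h3
            rw [hratio2 b y]
          have h5 : Real.exp (-Φ' * y) * W (y - a) = Real.exp (-Φ' * a) * w (y - a) := by
            rw [hWe (y - a), ← mul_assoc, ← Real.exp_add]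
            congr 2
            ring
          rw [h5] at h4
          exact h4
    have heq : (fun b => ∫ y, Set.indicator (Set.Ioc 0 b) (fun y => V (b - y) * W (y - a)) y / V b)
        =ᶠ[atTop] (fun b => (∫ y in (0:ℝ)..b, V (b - y) * W (y - a)) / V b) := by
      filter_upwards [eventually_ge_atTop (0:ℝ)] with b hb
      rw [integral_div, integral_indicator measurableSet_Ioc,
        ← intervalIntegral.integral_of_le hb]
    exact hval ▸ key.congr' heq
  -- splitting the integral of w
  set J : ℝ := ∫ y in Set.Ioc (0:ℝ) (-a), w y with hJdef
  have hsplitI : I1 = J + I2 := by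
    rw [hI1def, hJdef, hI2def, ← Set.Ioc_union_Ioi_eq_Ioi (by linarith : (0:ℝ) ≤ -a),
      setIntegral_union (Set.Ioc_disjoint_Ioi le_rfl) measurableSet_Ioi
        (hwint.mono_set Set.Ioc_subset_Ioi_self)
        (hwint.mono_set (Set.Ioi_subset_Ioi (by linarith)))]
  have hZval : ZΦ' (-a) = Real.exp (-Φ' * a) * (1 - r * J) := by
    rw [hZΦ' (-a), show Φ' * (-a) = -Φ' * a by ring,
      intervalIntegral.integral_of_le (by linarith : (0:ℝ) ≤ -a), ← hJdef]
  have hvalue : (0 + r * (Real.exp (-Φ' * a) * I2)) / W (-a) - r * (1 / Φ')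
      = ZΦ' (-a) / W (-a) - r / Φ' := by
    rw [hZval, mul_one_div]
    have h6 : r * I2 = 1 - r * J := by
      have h7 : r * I1 = r * J + r * I2 := by rw [hsplitI]; ring
      linarith [hrI]
    congr 2
    calc (0:ℝ) + r * (Real.exp (-Φ' * a) * I2) = Real.exp (-Φ' * a) * (r * I2) := by ring
      _ = Real.exp (-Φ' * a) * (1 - r * J) := by rw [h6]
  have hcomb := ((hC1.add (hC2.const_mul r)).div_const (W (-a))).sub (hC3.const_mul r)
  rw [hvalue] at hcomb
  constructor
  · refine hcomb.congr (fun b => ?_)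
    ring
  · field_simp
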